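/- Under the hypotheses of the error decomposition, for the filtered error operator E = U e(Λ) U^T with e_1, e_2 as above, and with V_k = diag(1/v_k(i)) (v_k(i) > 0) and sampling matrix M, for all i ≠ j: ||E^T V_k^T M^T (δ_i^r - δ_j^r)||^2 ≤ |e_1^2 - e_2^2| (D_{ij}^r)^2 + 2 e_2^2 / (min_i v_k(i))^2, where D_{ij}^r = ||U_k^T V_k^T M^T (δ_i^r - δ_j^r)||. -/

import Mathlib

open Matrix

noncomputable def enorm {m : ℕ} (v : Fin m → ℝ) : ℝ := Real.sqrt (∑ i, v i ^ 2)

theorem filtered_error_on_sampled_features {N n k : ℕ}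
    (U : Matrix (Fin N) (Fin N) ℝ) (lam : Fin N → ℝ)
    (hU1 : Uᵀ * U = 1) (hU2 : U * Uᵀ = 1) (hmono : Monotone lam)
    (e : ℝ → ℝ) (e1 e2 : ℝ) (hkN : k ≤ N)
    (he1 : ∀ l : Fin N, (l : ℕ) < k → |e (lam l)| ≤ e1)
    (he2 : ∀ l : Fin N, k ≤ (l : ℕ) → |e (lam l)| ≤ e2)
    (he1n : 0 ≤ e1) (he2n : 0 ≤ e2)
    (E : Matrix (Fin N) (Fin N) ℝ)
    (hE : E = U * Matrix.diagonal (fun l => e (lam l)) * Uᵀ)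
    (Uk : Matrix (Fin N) (Fin k) ℝ) (hUk : ∀ i j, Uk i j = U i (Fin.castLE hkN j))
    (v : Fin N → ℝ) (hv : ∀ i, 0 < v i)
    (V : Matrix (Fin N) (Fin N) ℝ) (hV : V = Matrix.diagonal fun i => (v i)⁻¹)
    (ω : Fin n → Fin N) (hω : Function.Injective ω)
    (M : Matrix (Fin n) (Fin N) ℝ) (hM : ∀ i j, M i j = if j = ω i then 1 else 0)
    (i j : Fin n) (hij : i ≠ j)
    (vmin : ℝ) (hvmin : IsLeast (Set.range v) vmin)
    (Dijr : ℝ)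
    (hD : Dijr = _root_.enorm (Ukᵀ.mulVec (Vᵀ.mulVec (Mᵀ.mulVec (Pi.single i 1 - Pi.single j 1))))) :
    ∑ a, (Eᵀ.mulVec (Vᵀ.mulVec (Mᵀ.mulVec (Pi.single i 1 - Pi.single j 1))) a) ^ 2
      ≤ |e1 ^ 2 - e2 ^ 2| * Dijr ^ 2 + 2 * e2 ^ 2 / vmin ^ 2 := by
  obtain ⟨hmem, hlb⟩ := hvmin
  obtain ⟨p0, hp0⟩ := hmem
  have hvminpos : 0 < vmin := hp0 ▸ hv p0
  set d : Fin n → ℝ := Pi.single i 1 - Pi.single j 1 with hd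
  set x : Fin N → ℝ := Vᵀ.mulVec (Mᵀ.mulVec d) with hxdef
  -- norm preservation for matrices with orthonormal columns
  have hnorm : ∀ (W : Matrix (Fin N) (Fin N) ℝ), Wᵀ * W = 1 →
      ∀ z : Fin N → ℝ, ∑ a, (W.mulVec z a) ^ 2 = ∑ l, z l ^ 2 := by
    intro W hW z
    have h2 : Wᵀ.mulVec (W.mulVec z) = z := by
      rw [Matrix.mulVec_mulVec, hW, Matrix.one_mulVec]
    calc ∑ a, (W.mulVec z a) ^ 2 = (W.mulVec z) ⬝ᵥ (W.mulVec z) := by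
          simp [dotProduct, sq]
      _ = (Wᵀ.mulVec (W.mulVec z)) ⬝ᵥ z := by
          rw [Matrix.dotProduct_mulVec, Matrix.mulVec_transpose]
      _ = z ⬝ᵥ z := by rw [h2]
      _ = ∑ l, z l ^ 2 := by simp [dotProduct, sq]
  set y : Fin N → ℝ := Uᵀ.mulVec x with hy
  -- explicit value of x
  have hMd : Mᵀ.mulVec d = fun q => (if q = ω i then (1:ℝ) else 0) - (if q = ω j then 1 else 0) := by
    funext q
    simp [Matrix.mulVec, dotProduct, hd, Pi.single_apply, hM, mul_sub,
      Finset.sum_sub_distrib, mul_ite]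
  have hxval : ∀ p, x p = (v p)⁻¹ * ((if p = ω i then (1:ℝ) else 0) - (if p = ω j then 1 else 0)) := by
    intro p
    rw [hxdef, hV, hMd]
    simp [Matrix.diagonal_transpose, Matrix.mulVec_diagonal]
  have hne : ω i ≠ ω j := fun h => hij (hω h)
  have hxsum : ∑ p, x p ^ 2 = ((v (ω i))⁻¹) ^ 2 + ((v (ω j))⁻¹) ^ 2 := by
    have key : ∀ p, x p ^ 2 = (if p = ω i then ((v p)⁻¹)^2 else 0)
        + (if p = ω j then ((v p)⁻¹)^2 else 0) := by
      intro p
      rw [hxval p]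
      by_cases h1 : p = ω i
      · subst h1
        rw [if_pos rfl, if_neg hne, if_pos rfl, if_neg hne]
        ring
      · by_cases h2 : p = ω j
        · subst h2
          rw [if_neg h1, if_pos rfl, if_neg h1, if_pos rfl]
          ring
        · rw [if_neg h1, if_neg h2, if_neg h1, if_neg h2]
          ring
    rw [Finset.sum_congr rfl (fun p _ => key p)]
    rw [Finset.sum_add_distrib]
    simp [Finset.sum_ite_eq']
  -- LHS in terms of y
  have hLHS : ∑ a, (Eᵀ.mulVec x a) ^ 2 = ∑ l, (e (lam l))^2 * (y l)^2 := by
    have hEt : Eᵀ = U * Matrix.diagonal (fun l => e (lam l)) * Uᵀ := by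
      rw [hE]
      simp [Matrix.transpose_mul, Matrix.diagonal_transpose, Matrix.mul_assoc]
    have hdiag : (Matrix.diagonal fun l => e (lam l)) *ᵥ y = fun l => e (lam l) * y l := by
      funext l; simp [Matrix.mulVec_diagonal]
    have hEx : Eᵀ.mulVec x = U.mulVec (fun l => e (lam l) * y l) := by
      rw [hEt, Matrix.mul_assoc, ← Matrix.mulVec_mulVec, ← Matrix.mulVec_mulVec, ← hy, hdiag]
    rw [hEx, hnorm U hU1]
    refine Finset.sum_congr rfl fun l _ => by ring
  set K : Finset (Fin N) := Finset.univ.filter (fun l => (l:ℕ) < k) with hK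
  -- Dijr^2 equals partial sum
  have hDsq : Dijr ^ 2 = ∑ l ∈ K, (y l)^2 := by
    have hUkx : ∀ q : Fin k, Ukᵀ.mulVec x q = y (Fin.castLE hkN q) := by
      intro q
      simp [Matrix.mulVec, dotProduct, hUk, hy, Matrix.transpose_apply]
    rw [hD, _root_.enorm, Real.sq_sqrt (Finset.sum_nonneg fun q _ => sq_nonneg _)]
    rw [Finset.sum_congr rfl (fun q _ => by rw [hUkx q])]
    rcases Nat.eq_zero_or_pos k with hk0 | hk0
    · subst hk0
      simp [hK]
    · refine Finset.sum_nbij' (fun q => Fin.castLE hkN q)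
        (fun l => ⟨(l : ℕ) % k, Nat.mod_lt _ hk0⟩) ?_ ?_ ?_ ?_ ?_
      · intro q _
        simp [hK, q.isLt]
      · intro l _; exact Finset.mem_univ _
      · intro q _
        ext
        simp [Nat.mod_eq_of_lt q.isLt]
      · intro l hl
        have hlk : (l : ℕ) < k := (Finset.mem_filter.mp hl).2
        ext
        simp [Nat.mod_eq_of_lt hlk]
      · intro q _; rfl
  -- sum bounds
  have hS1 : ∑ l ∈ K, (e (lam l))^2 * (y l)^2 ≤ e1^2 * ∑ l ∈ K, (y l)^2 := by
    rw [Finset.mul_sum]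
    refine Finset.sum_le_sum fun l hl => ?_
    have hlk : (l:ℕ) < k := (Finset.mem_filter.mp hl).2
    have h : (e (lam l))^2 ≤ e1^2 := by
      rw [← sq_abs]
      exact pow_le_pow_left₀ (abs_nonneg _) (he1 l hlk) 2
    exact mul_le_mul_of_nonneg_right h (sq_nonneg _)
  set K' : Finset (Fin N) := Finset.univ.filter (fun l => ¬ (l:ℕ) < k) with hK'
  have hS2 : ∑ l ∈ K', (e (lam l))^2 * (y l)^2 ≤ e2^2 * ∑ l ∈ K', (y l)^2 := by
    rw [Finset.mul_sum]
    refine Finset.sum_le_sum fun l hl => ?_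
    have hlk : k ≤ (l:ℕ) := Nat.le_of_not_lt (Finset.mem_filter.mp hl).2
    have h : (e (lam l))^2 ≤ e2^2 := by
      rw [← sq_abs]
      exact pow_le_pow_left₀ (abs_nonneg _) (he2 l hlk) 2
    exact mul_le_mul_of_nonneg_right h (sq_nonneg _)
  -- total sum bound
  have hyx : ∑ l, (y l)^2 = ∑ p, (x p)^2 := by
    have := hnorm Uᵀ (by rw [Matrix.transpose_transpose]; exact hU2) x
    simpa [hy] using this
  have hbound : ∀ p, ((v p)⁻¹)^2 ≤ (vmin⁻¹)^2 := by
    intro p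
    have h1 : vmin ≤ v p := hlb ⟨p, rfl⟩
    have h2 : (v p)⁻¹ ≤ vmin⁻¹ := inv_anti₀ hvminpos h1
    exact pow_le_pow_left₀ (le_of_lt (inv_pos.mpr (hv p))) h2 2
  have hxle : ∑ p, (x p)^2 ≤ 2 / vmin^2 := by
    rw [hxsum]
    calc ((v (ω i))⁻¹)^2 + ((v (ω j))⁻¹)^2 ≤ (vmin⁻¹)^2 + (vmin⁻¹)^2 :=
          add_le_add (hbound _) (hbound _)
      _ = 2 / vmin^2 := by rw [inv_pow]; ring
  have hTle : ∑ l ∈ K, (y l)^2 + ∑ l ∈ K', (y l)^2 ≤ 2 / vmin^2 := by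
    rw [hK, hK',
      Finset.sum_filter_add_sum_filter_not Finset.univ (fun l : Fin N => (l:ℕ) < k) (fun l => (y l)^2),
      hyx]
    exact hxle
  have hS1nn : 0 ≤ ∑ l ∈ K, (y l)^2 := Finset.sum_nonneg fun l _ => sq_nonneg _
  -- assemble
  rw [hLHS, ← Finset.sum_filter_add_sum_filter_not Finset.univ (fun l : Fin N => (l:ℕ) < k)
    (fun l => (e (lam l))^2 * (y l)^2)]
  calc ∑ l ∈ K, (e (lam l))^2 * (y l)^2 + ∑ l ∈ K', (e (lam l))^2 * (y l)^2
      ≤ e1^2 * ∑ l ∈ K, (y l)^2 + e2^2 * ∑ l ∈ K', (y l)^2 := add_le_add hS1 hS2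
    _ = (e1^2 - e2^2) * ∑ l ∈ K, (y l)^2
        + e2^2 * (∑ l ∈ K, (y l)^2 + ∑ l ∈ K', (y l)^2) := by ring
    _ ≤ |e1^2 - e2^2| * ∑ l ∈ K, (y l)^2 + e2^2 * (2 / vmin^2) :=
        add_le_add (mul_le_mul_of_nonneg_right (le_abs_self _) hS1nn)
          (mul_le_mul_of_nonneg_left hTle (sq_nonneg _))
    _ = |e1 ^ 2 - e2 ^ 2| * Dijr ^ 2 + 2 * e2 ^ 2 / vmin ^ 2 := by
        rw [hDsq]; ring
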